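/- Let Λ = ℤ^d, let Γ act on Λ by automorphisms, and let G = Λ ⋊ Γ. For every unitary character ξ of Λ whose Γ-orbit has order exactly n, there exists an irreducible unitary representation σ : G → U(n) whose set Σ_σ of occurring characters of Λ is exactly the Γ-orbit of ξ; indeed, the representation induced to G from the one-dimensional representation (a,γ) ↦ ξ(a) of the index-n subgroup Λ ⋊ Γ_ξ (taking η to be the trivial character of Γ_ξ) has this property. -/

import Mathlib

/-!
STATEMENT 11: For every character ξ of Λ = ℤ^d whose Γ-orbit has order exactly n, there is an
irreducible unitary representation σ : G = Λ ⋊ Γ → U(n) whose set Σ_σ of occurring characters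
is exactly the Γ-orbit of ξ; indeed the representation induced from the one-dimensional
representation (a,γ) ↦ ξ(a) of the index-n subgroup Λ ⋊ Γ_ξ (η trivial) has this property.
-/

noncomputable section

open scoped TensorProduct

namespace Statement11

/-- The lattice Λ = ℤ^d, written multiplicatively. -/
abbrev Lat (d : ℕ) := Multiplicative (Fin d → ℤ)

/-- Unitary characters of Λ. -/
abbrev CharT (d : ℕ) := Lat d →* Circle

variable {d : ℕ} {Γ : Type*} [Group Γ]

/-- The action of Γ on unitary characters: (γ·ξ)(a) = ξ(ρ_*(γ)⁻¹ a). -/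
def cact (φ : Γ →* MulAut (Lat d)) (γ : Γ) (ξ : CharT d) : CharT d :=
  ξ.comp (φ γ⁻¹).toMonoidHom

lemma cact_one (φ : Γ →* MulAut (Lat d)) (ξ : CharT d) : cact φ 1 ξ = ξ := by
  ext a; simp [cact]

lemma cact_mul (φ : Γ →* MulAut (Lat d)) (γ δ : Γ) (ξ : CharT d) :
    cact φ (γ * δ) ξ = cact φ γ (cact φ δ ξ) := by
  ext a; simp [cact, mul_inv_rev, map_mul]

/-- The isotropy (stabilizer) subgroup Γ_ξ = {γ ∈ Γ : γ·ξ = ξ}. -/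
def stab (φ : Γ →* MulAut (Lat d)) (ξ : CharT d) : Subgroup Γ where
  carrier := {γ | cact φ γ ξ = ξ}
  one_mem' := cact_one φ ξ
  mul_mem' := by
    intro a b ha hb
    simp only [Set.mem_setOf_eq] at ha hb ⊢
    rw [cact_mul, hb, ha]
  inv_mem' := by
    intro a ha
    simp only [Set.mem_setOf_eq] at ha ⊢
    have h : cact φ (a⁻¹ * a) ξ = ξ := by rw [inv_mul_cancel, cact_one]
    rwa [cact_mul, ha] at h

variable {n : ℕ}

/-- A unitary representation is irreducible if the only invariant subspaces are 0 and ℂⁿ. -/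
def IsIrred {H : Type*} [Group H] {k : ℕ} (σ : H →* Matrix.unitaryGroup (Fin k) ℂ) : Prop :=
  ∀ W : Submodule ℂ (Fin k → ℂ),
    (∀ g : H, ∀ v ∈ W, Matrix.mulVec (σ g : Matrix (Fin k) (Fin k) ℂ) v ∈ W) →
      W = ⊥ ∨ W = ⊤

/-- The ξ-eigenspace V_ξ = {v ∈ ℂⁿ : σ(a,1) v = ξ(a) v for all a ∈ Λ}. -/
def eig (φ : Γ →* MulAut (Lat d)) (σ : (Lat d ⋊[φ] Γ) →* Matrix.unitaryGroup (Fin n) ℂ)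
    (ξ : CharT d) : Submodule ℂ (Fin n → ℂ) :=
  ⨅ a : Lat d,
    Module.End.eigenspace
      (Matrix.mulVecLin (σ (SemidirectProduct.inl a) : Matrix (Fin n) (Fin n) ℂ)) (ξ a : ℂ)

/-- The set Σ_σ of characters of Λ occurring in σ. -/
def spec (φ : Γ →* MulAut (Lat d)) (σ : (Lat d ⋊[φ] Γ) →* Matrix.unitaryGroup (Fin n) ℂ) :
    Set (CharT d) :=
  {ξ | eig φ σ ξ ≠ ⊥}

/-- ℂ[G] ⊗_ℂ ℂ, as a ℂ[G]-module via the left factor. -/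
abbrev TT1 (φ : Γ →* MulAut (Lat d)) := MonoidAlgebra ℂ (Lat d ⋊[φ] Γ) ⊗[ℂ] ℂ

/-- The ℂ[G]-submodule of balancing relations g·h ⊗ c - g ⊗ h·c, for
h = (a,γ) ∈ H = Λ ⋊ Γ_ξ acting on ℂ by the one-dimensional representation
(a,γ) ↦ ξ(a)·η(γ). -/
def rel1 (φ : Γ →* MulAut (Lat d)) (ξ : CharT d) (η : ↥(stab φ ξ) →* Circle) :
    Submodule (MonoidAlgebra ℂ (Lat d ⋊[φ] Γ)) (TT1 φ) :=
  Submodule.span (MonoidAlgebra ℂ (Lat d ⋊[φ] Γ))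
    {x | ∃ (g : Lat d ⋊[φ] Γ) (a : Lat d) (γ : Γ) (hγ : γ ∈ stab φ ξ) (c : ℂ),
      x = MonoidAlgebra.single (g * (⟨a, γ⟩ : Lat d ⋊[φ] Γ)) (1 : ℂ) ⊗ₜ[ℂ] c
          - MonoidAlgebra.single g (1 : ℂ) ⊗ₜ[ℂ] ((ξ a : ℂ) * (η ⟨γ, hγ⟩ : ℂ) * c)}

/-- The induced module ℂ[G] ⊗_{ℂ[H]} ℂ. -/
abbrev Ind1 (φ : Γ →* MulAut (Lat d)) (ξ : CharT d) (η : ↥(stab φ ξ) →* Circle) :=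
  TT1 φ ⧸ rel1 φ ξ η

section Aux

variable (φ : Γ →* MulAut (Lat d)) (ξ : CharT d)

abbrev Orb : Set (CharT d) := Set.range (fun γ : Γ => cact φ γ ξ)

lemma mem_orb_self : ξ ∈ Orb φ ξ := ⟨1, cact_one φ ξ⟩

lemma cact_mem_orb (γ : Γ) {η : CharT d} (hη : η ∈ Orb φ ξ) : cact φ γ η ∈ Orb φ ξ := by
  obtain ⟨δ, rfl⟩ := hη
  exact ⟨γ * δ, cact_mul φ γ δ ξ⟩

lemma cact_inv_cact (γ : Γ) (η : CharT d) : cact φ γ⁻¹ (cact φ γ η) = η := by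
  rw [← cact_mul, inv_mul_cancel, cact_one]

lemma cact_cact_inv (γ : Γ) (η : CharT d) : cact φ γ (cact φ γ⁻¹ η) = η := by
  rw [← cact_mul, mul_inv_cancel, cact_one]

def oact (γ : Γ) : ↥(Orb φ ξ) ≃ ↥(Orb φ ξ) where
  toFun η := ⟨cact φ γ η, cact_mem_orb φ ξ γ η.2⟩
  invFun η := ⟨cact φ γ⁻¹ η, cact_mem_orb φ ξ γ⁻¹ η.2⟩
  left_inv η := Subtype.ext (cact_inv_cact φ γ η)
  right_inv η := Subtype.ext (cact_cact_inv φ γ η)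

variable [Fintype ↥(Orb φ ξ)] (ob : Fin n ≃ ↥(Orb φ ξ))
set_option linter.unusedSectionVars false

/-- character attached to index i -/
def chr (i : Fin n) : CharT d := ((ob i : CharT d))

def pidx (γ : Γ) : Equiv.Perm (Fin n) := ob.trans ((oact φ ξ γ).trans ob.symm)

lemma pidx_apply (γ : Γ) (i : Fin n) :
    pidx φ ξ ob γ i = ob.symm ⟨cact φ γ (chr φ ξ ob i), cact_mem_orb φ ξ γ (ob i).2⟩ := rfl

lemma chr_pidx (γ : Γ) (i : Fin n) :
    chr φ ξ ob (pidx φ ξ ob γ i) = cact φ γ (chr φ ξ ob i) := by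
  simp [pidx_apply, chr]

lemma pidx_one (i : Fin n) : pidx φ ξ ob 1 i = i := by
  simp only [pidx_apply]
  rw [show (⟨cact φ 1 (chr φ ξ ob i), _⟩ : ↥(Orb φ ξ)) = ob i from
    Subtype.ext (cact_one φ _), Equiv.symm_apply_apply]

lemma pidx_mul (γ δ : Γ) (i : Fin n) :
    pidx φ ξ ob (γ * δ) i = pidx φ ξ ob γ (pidx φ ξ ob δ i) := by
  simp only [pidx_apply, chr]
  congr 1
  ext1
  simp only [Equiv.apply_symm_apply]
  exact cact_mul φ γ δ _

/-- the matrix of the induced representation at group element g -/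
def mat (g : Lat d ⋊[φ] Γ) : Matrix (Fin n) (Fin n) ℂ :=
  Matrix.of fun i j =>
    if j = pidx φ ξ ob g.right⁻¹ i then ((chr φ ξ ob i) g.left : ℂ) else 0

lemma mat_mulVec (g : Lat d ⋊[φ] Γ) (v : Fin n → ℂ) (i : Fin n) :
    (mat φ ξ ob g).mulVec v i
      = ((chr φ ξ ob i) g.left : ℂ) * v (pidx φ ξ ob g.right⁻¹ i) := by
  simp only [mat, Matrix.mulVec, dotProduct, Matrix.of_apply, ite_mul, zero_mul]
  rw [Finset.sum_ite_eq' Finset.univ (pidx φ ξ ob g.right⁻¹ i)]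
  simp

lemma mat_mul (g g' : Lat d ⋊[φ] Γ) :
    mat φ ξ ob (g * g') = mat φ ξ ob g * mat φ ξ ob g' := by
  ext i j
  rw [Matrix.mul_apply]
  simp only [mat, Matrix.of_apply, ite_mul, zero_mul]
  rw [Finset.sum_ite_eq' Finset.univ (pidx φ ξ ob g.right⁻¹ i)]
  simp only [Finset.mem_univ, if_true, SemidirectProduct.mul_right, SemidirectProduct.mul_left,
    mul_inv_rev, pidx_mul]
  by_cases h : j = pidx φ ξ ob g'.right⁻¹ (pidx φ ξ ob g.right⁻¹ i)
  · rw [if_pos h, if_pos h]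
    rw [chr_pidx]
    have : (cact φ g.right⁻¹ (chr φ ξ ob i)) g'.left = (chr φ ξ ob i) (φ g.right g'.left) := by
      simp [cact]
    rw [this, map_mul, Circle.coe_mul]
  · rw [if_neg h, if_neg h, mul_zero]

lemma mat_mem (g : Lat d ⋊[φ] Γ) : mat φ ξ ob g ∈ Matrix.unitaryGroup (Fin n) ℂ := by
  rw [Matrix.mem_unitaryGroup_iff]
  ext i j
  rw [Matrix.mul_apply]
  simp only [Matrix.star_apply, mat, Matrix.of_apply, RCLike.star_def, ite_mul, zero_mul]
  rw [Finset.sum_ite_eq' Finset.univ (pidx φ ξ ob g.right⁻¹ i)]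
  simp only [Finset.mem_univ, if_true, Matrix.one_apply]
  by_cases h : i = j
  · subst h
    rw [if_pos rfl, if_pos rfl]
    rw [← Circle.coe_inv_eq_conj, ← Circle.coe_mul, mul_inv_cancel, Circle.coe_one]
  · rw [if_neg (fun hc => h ((pidx φ ξ ob g.right⁻¹).injective hc)), if_neg h, map_zero,
      mul_zero]

/-- the induced unitary representation -/
def rep : (Lat d ⋊[φ] Γ) →* Matrix.unitaryGroup (Fin n) ℂ :=
  MonoidHom.mk' (fun g => ⟨mat φ ξ ob g, mat_mem φ ξ ob g⟩)
    (fun g g' => Subtype.ext (mat_mul φ ξ ob g g'))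

lemma rep_coe (g : Lat d ⋊[φ] Γ) : ((rep φ ξ ob g : Matrix.unitaryGroup (Fin n) ℂ) :
    Matrix (Fin n) (Fin n) ℂ) = mat φ ξ ob g := rfl

lemma mat_mulVec_single (g : Lat d ⋊[φ] Γ) (i : Fin n) :
    (mat φ ξ ob g).mulVec (Pi.single i (1:ℂ))
      = ((chr φ ξ ob (pidx φ ξ ob g.right i)) g.left : ℂ) •
          (Pi.single (pidx φ ξ ob g.right i) (1:ℂ) : Fin n → ℂ) := by
  funext k
  rw [mat_mulVec]
  rcases eq_or_ne k (pidx φ ξ ob g.right i) with h | h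
  · subst h
    have h1 : pidx φ ξ ob g.right⁻¹ (pidx φ ξ ob g.right i) = i := by
      rw [← pidx_mul, inv_mul_cancel, pidx_one]
    rw [h1]
    simp
  · have h2 : pidx φ ξ ob g.right⁻¹ k ≠ i := by
      intro hc
      apply h
      have := congrArg (pidx φ ξ ob g.right) hc
      rwa [← pidx_mul, mul_inv_cancel, pidx_one] at this
    simp [Pi.single_eq_of_ne h2, Pi.single_eq_of_ne h]
    
end Aux

section Aux2

variable (φ : Γ →* MulAut (Lat d)) (ξ : CharT d) [Fintype ↥(Orb φ ξ)] (ob : Fin n ≃ ↥(Orb φ ξ))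
set_option linter.unusedSectionVars false

def repγ (i : Fin n) : Γ := (ob i).2.choose

lemma repγ_spec (i : Fin n) : cact φ (repγ φ ξ ob i) ξ = chr φ ξ ob i := (ob i).2.choose_spec

lemma mem_eig_iff (η : CharT d) (v : Fin n → ℂ) :
    v ∈ eig φ (rep φ ξ ob) η ↔
      ∀ (a : Lat d) (k : Fin n), ((chr φ ξ ob k) a : ℂ) * v k = (η a : ℂ) * v k := by
  unfold eig
  rw [Submodule.mem_iInf]
  apply forall_congr'
  intro a
  rw [Module.End.mem_eigenspace_iff, funext_iff]
  apply forall_congr'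
  intro k
  rw [Matrix.mulVecLin_apply, rep_coe, mat_mulVec]
  simp [pidx_one]

lemma spec_eq : spec φ (rep φ ξ ob) = Orb φ ξ := by
  ext η
  simp only [spec, Set.mem_setOf_eq]
  constructor
  · intro hne
    obtain ⟨v, hv, hv0⟩ := (Submodule.ne_bot_iff _).1 hne
    obtain ⟨i, hi⟩ := Function.ne_iff.1 hv0
    have hmem := (mem_eig_iff φ ξ ob η v).1 hv
    have hchr : ∀ a, (chr φ ξ ob i) a = η a := by
      intro a
      have h := hmem a i
      have : ((chr φ ξ ob i) a : ℂ) = (η a : ℂ) := mul_right_cancel₀ (by simpa using hi) h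
      exact Circle.coe_injective this
    have hη : η = chr φ ξ ob i := MonoidHom.ext fun a => (hchr a).symm
    rw [hη]
    exact (ob i).2
  · intro hη
    rw [Submodule.ne_bot_iff]
    refine ⟨Pi.single (ob.symm ⟨η, hη⟩) 1, ?_, ?_⟩
    · rw [mem_eig_iff]
      intro a k
      rcases eq_or_ne k (ob.symm ⟨η, hη⟩) with rfl | hk
      · have : chr φ ξ ob (ob.symm ⟨η, hη⟩) = η := by
          simp [chr]
        rw [this]
      · rw [Pi.single_eq_of_ne hk, mul_zero, mul_zero]
    · intro h
      simpa using congrFun h (ob.symm ⟨η, hη⟩)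

lemma irred : IsIrred (rep φ ξ ob) := by
  classical
  intro W hW
  by_cases hbot : W = ⊥
  · left; exact hbot
  right
  obtain ⟨v, hvW, hv0⟩ := (Submodule.ne_bot_iff W).1 hbot
  have key : ∀ (m : ℕ) (w : Fin n → ℂ), w ∈ W → ∀ i, w i ≠ 0 →
      (Finset.univ.filter fun k => w k ≠ 0).card ≤ m → (Pi.single i 1 : Fin n → ℂ) ∈ W := by
    intro m
    induction m with
    | zero =>
      intro w hw i hwi hc
      have hmem : i ∈ Finset.univ.filter fun k => w k ≠ 0 :=
        Finset.mem_filter.2 ⟨Finset.mem_univ _, hwi⟩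
      rw [Nat.le_zero, Finset.card_eq_zero, Finset.eq_empty_iff_forall_notMem] at hc
      exact absurd hmem (hc i)
    | succ m ih =>
      intro w hw i hwi hc
      by_cases hone : ∀ j, w j ≠ 0 → j = i
      · have hv : (Pi.single i 1 : Fin n → ℂ) = (w i)⁻¹ • w := by
          funext j
          rcases eq_or_ne j i with rfl | hji
          · simp [inv_mul_cancel₀ hwi]
          · have hwj : w j = 0 := by
              by_contra h0
              exact hji (hone j h0)
            simp [Pi.single_eq_of_ne hji, hwj]
        rw [hv]
        exact W.smul_mem _ hw
      · push_neg at hone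
        obtain ⟨j, hwj, hji⟩ := hone
        have hchr : chr φ ξ ob i ≠ chr φ ξ ob j := by
          intro hc'
          exact hji (ob.injective (Subtype.ext hc'.symm))
        have hex : ∃ a, (chr φ ξ ob i) a ≠ (chr φ ξ ob j) a := by
          by_contra hno
          push_neg at hno
          exact hchr (MonoidHom.ext hno)
        obtain ⟨a, ha⟩ := hex
        set u : Fin n → ℂ :=
          (mat φ ξ ob ⟨a, 1⟩).mulVec w - (((chr φ ξ ob j) a : ℂ)) • w with hu
        have huW : u ∈ W := W.sub_mem (hW ⟨a, 1⟩ w hw) (W.smul_mem _ hw)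
        have hu_apply : ∀ k, u k = (((chr φ ξ ob k) a : ℂ) - ((chr φ ξ ob j) a : ℂ)) * w k := by
          intro k
          simp [hu, mat_mulVec, pidx_one, sub_mul]
        have hui : u i ≠ 0 := by
          rw [hu_apply]
          exact mul_ne_zero (sub_ne_zero.2 fun hc' => ha (Circle.coe_injective hc')) hwi
        have hsub : (Finset.univ.filter fun k => u k ≠ 0) ⊆
            (Finset.univ.filter fun k => w k ≠ 0).erase j := by
          intro k hk
          simp only [Finset.mem_filter, Finset.mem_univ, true_and] at hk
          rw [Finset.mem_erase, Finset.mem_filter]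
          refine ⟨?_, Finset.mem_univ _, ?_⟩
          · rintro rfl
            apply hk
            rw [hu_apply, sub_self, zero_mul]
          · intro h0
            apply hk
            rw [hu_apply, h0, mul_zero]
        have hjmem : j ∈ Finset.univ.filter fun k => w k ≠ 0 :=
          Finset.mem_filter.2 ⟨Finset.mem_univ _, hwj⟩
        have h1 := Finset.card_le_card hsub
        have h2 := Finset.card_erase_of_mem hjmem
        have h3 : 0 < (Finset.univ.filter fun k => w k ≠ 0).card :=
          Finset.card_pos.2 ⟨j, hjmem⟩
        exact ih u huW i hui (by omega)
  obtain ⟨i0, hi0⟩ := Function.ne_iff.1 hv0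
  have hsingle := key _ v hvW i0 hi0 le_rfl
  have hall : ∀ j, (Pi.single j 1 : Fin n → ℂ) ∈ W := by
    intro j
    set γ := repγ φ ξ ob j * (repγ φ ξ ob i0)⁻¹ with hγ
    have hmv := hW ⟨1, γ⟩ _ hsingle
    rw [rep_coe, mat_mulVec_single] at hmv
    have hpi : pidx φ ξ ob (⟨1, γ⟩ : Lat d ⋊[φ] Γ).right i0 = j := by
      show pidx φ ξ ob γ i0 = j
      have hcc : cact φ γ (chr φ ξ ob i0) = chr φ ξ ob j := by
        rw [hγ, cact_mul, ← repγ_spec φ ξ ob i0, cact_inv_cact, repγ_spec]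
      rw [pidx_apply]
      have : (⟨cact φ γ (chr φ ξ ob i0), cact_mem_orb φ ξ γ (ob i0).2⟩ : ↥(Orb φ ξ)) = ob j :=
        Subtype.ext (by simpa [chr] using hcc)
      rw [this, Equiv.symm_apply_apply]
    rw [hpi] at hmv
    simpa using hmv
  rw [eq_top_iff]
  intro w _
  have hw : w = ∑ k, w k • (Pi.single k 1 : Fin n → ℂ) := by
    have h1 : ∀ k, w k • (Pi.single k 1 : Fin n → ℂ) = Pi.single k (w k) := by
      intro k
      rw [← Pi.single_smul, smul_eq_mul, mul_one]
    simp only [h1]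
    exact (Finset.univ_sum_single w).symm
  rw [hw]
  exact Submodule.sum_mem _ fun k _ => W.smul_mem _ (hall k)

end Aux2

section Aux3

variable (φ : Γ →* MulAut (Lat d)) (ξ : CharT d) [Fintype ↥(Orb φ ξ)] (ob : Fin n ≃ ↥(Orb φ ξ))
set_option linter.unusedSectionVars false

/-- base index -/
def bi : Fin n := ob.symm ⟨ξ, mem_orb_self φ ξ⟩

lemma chr_bi : chr φ ξ ob (bi φ ξ ob) = ξ := by simp [chr, bi]

/-- base vector -/
def vxi : Fin n → ℂ := Pi.single (bi φ ξ ob) 1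

/-- the representation as a monoid hom into endomorphisms -/
def tau : (Lat d ⋊[φ] Γ) →* Module.End ℂ (Fin n → ℂ) where
  toFun g := Matrix.mulVecLin (mat φ ξ ob g)
  map_one' := by
    have h1 : mat φ ξ ob 1 = 1 := congrArg Subtype.val (map_one (rep φ ξ ob))
    show (mat φ ξ ob 1).mulVecLin = 1
    rw [h1]
    exact Matrix.mulVecLin_one
  map_mul' g g' := by
    show (mat φ ξ ob (g * g')).mulVecLin
      = (mat φ ξ ob g).mulVecLin * (mat φ ξ ob g').mulVecLin
    rw [mat_mul, Matrix.mulVecLin_mul]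
    rfl

/-- the algebra morphism out of the group algebra -/
def AH : MonoidAlgebra ℂ (Lat d ⋊[φ] Γ) →ₐ[ℂ] Module.End ℂ (Fin n → ℂ) :=
  MonoidAlgebra.lift ℂ _ _ (tau φ ξ ob)

lemma AH_single (g : Lat d ⋊[φ] Γ) (c : ℂ) (v : Fin n → ℂ) :
    AH φ ξ ob (MonoidAlgebra.single g c) v = c • (mat φ ξ ob g).mulVec v := by
  rw [AH, MonoidAlgebra.lift_single]
  simp [tau]

/-- evaluation at the base vector -/
def ev : Module.End ℂ (Fin n → ℂ) →ₗ[ℂ] (Fin n → ℂ) where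
  toFun f := f (vxi φ ξ ob)
  map_add' f g := rfl
  map_smul' c f := rfl

def Fp : TT1 φ →ₗ[ℂ] (Fin n → ℂ) :=
  (ev φ ξ ob).comp ((AlgHom.toLinearMap (AH φ ξ ob)).comp
    (LinearEquiv.toLinearMap (TensorProduct.rid ℂ (MonoidAlgebra ℂ (Lat d ⋊[φ] Γ)))))

lemma Fp_tmul (y : MonoidAlgebra ℂ (Lat d ⋊[φ] Γ)) (c : ℂ) :
    Fp φ ξ ob (y ⊗ₜ[ℂ] c) = c • (AH φ ξ ob y) (vxi φ ξ ob) := by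
  rw [Fp]
  simp only [ev, LinearMap.coe_comp, Function.comp_apply, LinearEquiv.coe_coe,
    TensorProduct.rid_tmul, map_smul, AlgHom.toLinearMap_apply, LinearMap.coe_mk,
    AddHom.coe_mk, LinearMap.smul_apply]

lemma Fp_smul (r : MonoidAlgebra ℂ (Lat d ⋊[φ] Γ)) (x : TT1 φ) :
    Fp φ ξ ob (r • x) = AH φ ξ ob r (Fp φ ξ ob x) := by
  induction x using TensorProduct.induction_on with
  | zero => simp
  | tmul y c =>
    rw [TensorProduct.smul_tmul', smul_eq_mul, Fp_tmul, Fp_tmul, map_mul]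
    simp [Module.End.mul_apply]
  | add x y hx hy => rw [smul_add, map_add, map_add, hx, hy, map_add]

lemma tau_stab (a : Lat d) (γ : Γ) (hγ : γ ∈ stab φ ξ) :
    (mat φ ξ ob (⟨a, γ⟩ : Lat d ⋊[φ] Γ)).mulVec (vxi φ ξ ob)
      = (ξ a : ℂ) • vxi φ ξ ob := by
  have hγ' : cact φ γ ξ = ξ := hγ
  rw [vxi, mat_mulVec_single]
  have hpi : pidx φ ξ ob (⟨a, γ⟩ : Lat d ⋊[φ] Γ).right (bi φ ξ ob) = bi φ ξ ob := by
    show pidx φ ξ ob γ (bi φ ξ ob) = bi φ ξ ob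
    rw [pidx_apply]
    have heq : (⟨cact φ γ (chr φ ξ ob (bi φ ξ ob)),
          cact_mem_orb φ ξ γ (ob (bi φ ξ ob)).2⟩ : ↥(Orb φ ξ))
        = ⟨ξ, mem_orb_self φ ξ⟩ := by
      apply Subtype.ext
      show cact φ γ (chr φ ξ ob (bi φ ξ ob)) = ξ
      rw [chr_bi, hγ']
    rw [heq, bi]
  rw [hpi, chr_bi]

lemma Fp_rel (x : TT1 φ) (hx : x ∈ rel1 φ ξ 1) : Fp φ ξ ob x = 0 := by
  refine Submodule.span_induction ?_ ?_ ?_ ?_ hx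
  · rintro x ⟨g, a, γ, hγ, c, rfl⟩
    rw [map_sub, Fp_tmul, Fp_tmul]
    have hsplit : (MonoidAlgebra.single (g * (⟨a, γ⟩ : Lat d ⋊[φ] Γ)) (1 : ℂ)
        : MonoidAlgebra ℂ (Lat d ⋊[φ] Γ))
        = MonoidAlgebra.single g 1 * MonoidAlgebra.single (⟨a, γ⟩ : Lat d ⋊[φ] Γ) 1 := by
      rw [MonoidAlgebra.single_mul_single, one_mul]
    rw [hsplit, map_mul, Module.End.mul_apply]
    have h1 : AH φ ξ ob (MonoidAlgebra.single (⟨a, γ⟩ : Lat d ⋊[φ] Γ) 1) (vxi φ ξ ob)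
        = (ξ a : ℂ) • vxi φ ξ ob := by
      rw [AH_single, one_smul, tau_stab φ ξ ob a γ hγ]
    rw [h1, map_smul]
    simp only [MonoidHom.one_apply, Circle.coe_one, mul_one]
    rw [smul_smul, mul_comm c]
    exact sub_self _
  · simp
  · intro x y _ _ hx hy
    rw [map_add, hx, hy, add_zero]
  · intro r x _ hx
    rw [Fp_smul, hx, map_zero]

/-- descended map on the induced module -/
def Fbar : Ind1 φ ξ 1 →ₗ[ℂ] (Fin n → ℂ) :=
  (Submodule.liftQ ((rel1 φ ξ 1).restrictScalars ℂ) (Fp φ ξ ob)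
      (fun x hx => LinearMap.mem_ker.2 (Fp_rel φ ξ ob x hx))).comp
    (Submodule.Quotient.restrictScalarsEquiv ℂ (rel1 φ ξ 1)).symm.toLinearMap

lemma Fbar_mk (x : TT1 φ) :
    Fbar φ ξ ob (Submodule.Quotient.mk x) = Fp φ ξ ob x := rfl

/-- the map from ℂⁿ to the induced module -/
def Emap : (Fin n → ℂ) →ₗ[ℂ] Ind1 φ ξ 1 :=
  (Pi.basisFun ℂ (Fin n)).constr ℂ fun i =>
    Submodule.Quotient.mk
      ((MonoidAlgebra.single (⟨1, repγ φ ξ ob i⟩ : Lat d ⋊[φ] Γ) (1:ℂ)) ⊗ₜ[ℂ] (1:ℂ))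

lemma Emap_single (i : Fin n) :
    Emap φ ξ ob (Pi.single i 1)
      = Submodule.Quotient.mk
          ((MonoidAlgebra.single (⟨1, repγ φ ξ ob i⟩ : Lat d ⋊[φ] Γ) (1:ℂ)) ⊗ₜ[ℂ] (1:ℂ)) := by
  rw [← Pi.basisFun_apply, Emap, Module.Basis.constr_basis]

lemma mk_single_eq (a : Lat d) (γ : Γ) (c : ℂ) :
    (Submodule.Quotient.mk
        ((MonoidAlgebra.single (⟨a, γ⟩ : Lat d ⋊[φ] Γ) (1:ℂ)) ⊗ₜ[ℂ] c) : Ind1 φ ξ 1)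
      = (((chr φ ξ ob (pidx φ ξ ob γ (bi φ ξ ob))) a : ℂ) * c) •
          (Submodule.Quotient.mk
            ((MonoidAlgebra.single
                (⟨1, repγ φ ξ ob (pidx φ ξ ob γ (bi φ ξ ob))⟩ : Lat d ⋊[φ] Γ) (1:ℂ))
              ⊗ₜ[ℂ] (1:ℂ))) := by
  set j := pidx φ ξ ob γ (bi φ ξ ob) with hj
  set r := repγ φ ξ ob j with hr
  have hchrj : chr φ ξ ob j = cact φ γ ξ := by
    rw [hj, chr_pidx, chr_bi]
  have hs : r⁻¹ * γ ∈ stab φ ξ := by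
    show cact φ (r⁻¹ * γ) ξ = ξ
    rw [cact_mul, ← hchrj, ← repγ_spec φ ξ ob j, ← hr, cact_inv_cact]
  set b : Lat d := (φ r⁻¹) a with hb
  have hξb : (ξ b : ℂ) = ((chr φ ξ ob j) a : ℂ) := by
    have : ξ b = (cact φ r ξ) a := rfl
    rw [this, repγ_spec φ ξ ob j]
  have hprod : (⟨1, r⟩ : Lat d ⋊[φ] Γ) * ⟨b, r⁻¹ * γ⟩ = ⟨a, γ⟩ := by
    rw [SemidirectProduct.mul_def]
    congr 1
    · rw [one_mul, hb, ← MulAut.mul_apply, ← map_mul, mul_inv_cancel, map_one, MulAut.one_apply]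
    · rw [mul_inv_cancel_left]
  have hgen : (MonoidAlgebra.single (⟨a, γ⟩ : Lat d ⋊[φ] Γ) (1:ℂ)) ⊗ₜ[ℂ] c
      - (MonoidAlgebra.single (⟨1, r⟩ : Lat d ⋊[φ] Γ) (1:ℂ)) ⊗ₜ[ℂ]
          ((ξ b : ℂ) * (((1 : ↥(stab φ ξ) →* Circle) ⟨r⁻¹ * γ, hs⟩ : Circle) : ℂ) * c)
      ∈ rel1 φ ξ 1 := by
    apply Submodule.subset_span
    exact ⟨⟨1, r⟩, b, r⁻¹ * γ, hs, c, by rw [hprod]⟩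
  have heq := (Submodule.Quotient.eq (rel1 φ ξ 1)).2 hgen
  rw [heq]
  have hsc : (MonoidAlgebra.single (⟨1, r⟩ : Lat d ⋊[φ] Γ) (1:ℂ)) ⊗ₜ[ℂ]
      ((ξ b : ℂ) * (((1 : ↥(stab φ ξ) →* Circle) ⟨r⁻¹ * γ, hs⟩ : Circle) : ℂ) * c)
      = (((chr φ ξ ob j) a : ℂ) * c) •
          ((MonoidAlgebra.single (⟨1, r⟩ : Lat d ⋊[φ] Γ) (1:ℂ)) ⊗ₜ[ℂ] (1:ℂ)) := by
    rw [← TensorProduct.tmul_smul]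
    congr 1
    rw [smul_eq_mul, mul_one]
    simp only [MonoidHom.one_apply, Circle.coe_one, mul_one]
    rw [hξb, mul_comm]
  rw [hsc, Submodule.Quotient.mk_smul]

end Aux3

section Aux4
variable (φ : Γ →* MulAut (Lat d)) (ξ : CharT d) [Fintype ↥(Orb φ ξ)] (ob : Fin n ≃ ↥(Orb φ ξ))
set_option linter.unusedSectionVars false

lemma Emap_Fp (x : TT1 φ) :
    Emap φ ξ ob (Fp φ ξ ob x) = Submodule.Quotient.mk x := by
  induction x using TensorProduct.induction_on with
  | zero => simp
  | tmul y c =>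
    induction y using MonoidAlgebra.induction_on with
    | of g =>
      obtain ⟨a, γ⟩ := g
      rw [show (MonoidAlgebra.of ℂ (Lat d ⋊[φ] Γ)) ⟨a, γ⟩
          = MonoidAlgebra.single (⟨a, γ⟩ : Lat d ⋊[φ] Γ) (1:ℂ) from rfl]
      rw [Fp_tmul, AH_single, one_smul]
      rw [show vxi φ ξ ob = Pi.single (bi φ ξ ob) 1 from rfl]
      rw [mat_mulVec_single φ ξ ob ⟨a, γ⟩ (bi φ ξ ob)]
      rw [map_smul, map_smul, Emap_single]
      rw [mk_single_eq φ ξ ob a γ c]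
      rw [smul_smul, mul_comm c]
    | add f g hf hg =>
      rw [TensorProduct.add_tmul, map_add, map_add, hf, hg, ← Submodule.Quotient.mk_add]
    | smul r f hf =>
      rw [← TensorProduct.smul_tmul', map_smul, map_smul, hf, ← Submodule.Quotient.mk_smul]
  | add x y hx hy => rw [map_add, map_add, hx, hy, ← Submodule.Quotient.mk_add]

lemma Fbar_comp_Emap : (Fbar φ ξ ob).comp (Emap φ ξ ob) = LinearMap.id := by
  apply Module.Basis.ext (Pi.basisFun ℂ (Fin n))
  intro i
  rw [LinearMap.comp_apply, Pi.basisFun_apply, Emap_single, Fbar_mk, Fp_tmul, AH_single,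
    one_smul, one_smul]
  rw [show vxi φ ξ ob = Pi.single (bi φ ξ ob) 1 from rfl]
  rw [mat_mulVec_single φ ξ ob (⟨1, repγ φ ξ ob i⟩ : Lat d ⋊[φ] Γ) (bi φ ξ ob)]
  have hpi : pidx φ ξ ob (⟨1, repγ φ ξ ob i⟩ : Lat d ⋊[φ] Γ).right (bi φ ξ ob) = i := by
    show pidx φ ξ ob (repγ φ ξ ob i) (bi φ ξ ob) = i
    rw [pidx_apply]
    have heq : (⟨cact φ (repγ φ ξ ob i) (chr φ ξ ob (bi φ ξ ob)),
          cact_mem_orb φ ξ _ (ob (bi φ ξ ob)).2⟩ : ↥(Orb φ ξ)) = ob i := by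
      apply Subtype.ext
      show cact φ (repγ φ ξ ob i) (chr φ ξ ob (bi φ ξ ob)) = ↑(ob i)
      rw [chr_bi, repγ_spec]
      rfl
    rw [heq, Equiv.symm_apply_apply]
  rw [hpi]
  have h1 : ((chr φ ξ ob i) ((⟨1, repγ φ ξ ob i⟩ : Lat d ⋊[φ] Γ).left) : ℂ) = 1 := by
    show ((chr φ ξ ob i) 1 : ℂ) = 1
    rw [map_one, Circle.coe_one]
  rw [h1, one_smul, LinearMap.id_apply]

lemma Emap_comp_Fbar : (Emap φ ξ ob).comp (Fbar φ ξ ob) = LinearMap.id := by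
  apply LinearMap.ext
  intro z
  obtain ⟨x, rfl⟩ := Submodule.Quotient.mk_surjective _ z
  rw [LinearMap.comp_apply, Fbar_mk, Emap_Fp, LinearMap.id_apply]

end Aux4

theorem statement11 (d n : ℕ) (hd : 1 ≤ d) {Γ : Type*} [Group Γ]
    (φ : Γ →* MulAut (Lat d)) (ξ : CharT d)
    (horb : (Set.range (fun γ : Γ => cact φ γ ξ)).Finite)
    (hn : Nat.card ↥(Set.range (fun γ : Γ => cact φ γ ξ)) = n) :
    ∃ σ : (Lat d ⋊[φ] Γ) →* Matrix.unitaryGroup (Fin n) ℂ,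
      IsIrred σ ∧
      -- the occurring characters of Λ are exactly the Γ-orbit of ξ
      spec φ σ = Set.range (fun γ : Γ => cact φ γ ξ) ∧
      -- indeed σ is (isomorphic to) the representation induced from the one-dimensional
      -- representation (a,γ) ↦ ξ(a) of Λ ⋊ Γ_ξ, i.e. with η the trivial character
      ∃ e : (Fin n → ℂ) ≃ₗ[ℂ] Ind1 φ ξ (1 : ↥(stab φ ξ) →* Circle),
        ∀ (g : Lat d ⋊[φ] Γ) (v : Fin n → ℂ),
          e (Matrix.mulVec (σ g : Matrix (Fin n) (Fin n) ℂ) v)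
            = (MonoidAlgebra.single g (1 : ℂ) : MonoidAlgebra ℂ (Lat d ⋊[φ] Γ)) • e v := by
  haveI : Fintype ↥(Orb φ ξ) := horb.fintype
  have hcard : Fintype.card ↥(Orb φ ξ) = n := by
    rw [← Nat.card_eq_fintype_card]
    exact hn
  let ob : Fin n ≃ ↥(Orb φ ξ) := (Fintype.equivFinOfCardEq hcard).symm
  refine ⟨rep φ ξ ob, irred φ ξ ob, spec_eq φ ξ ob, ?_⟩
  refine ⟨LinearEquiv.ofLinear (Emap φ ξ ob) (Fbar φ ξ ob)
      (Emap_comp_Fbar φ ξ ob) (Fbar_comp_Emap φ ξ ob), ?_⟩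
  intro g v
  rw [LinearEquiv.ofLinear_apply, LinearEquiv.ofLinear_apply]
  obtain ⟨x, hx⟩ := Submodule.Quotient.mk_surjective (rel1 φ ξ 1) (Emap φ ξ ob v)
  have hv : Fp φ ξ ob x = v := by
    have h1 := DFunLike.congr_fun (Fbar_comp_Emap φ ξ ob) v
    rw [LinearMap.comp_apply, LinearMap.id_apply] at h1
    rw [← Fbar_mk, hx, h1]
  have h2 : Matrix.mulVec ((rep φ ξ ob g : Matrix.unitaryGroup (Fin n) ℂ) :
        Matrix (Fin n) (Fin n) ℂ) v
      = Fp φ ξ ob ((MonoidAlgebra.single g (1:ℂ) : MonoidAlgebra ℂ (Lat d ⋊[φ] Γ)) • x) := by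
    rw [Fp_smul, AH_single, one_smul, hv, rep_coe]
  rw [h2, Emap_Fp, ← hx]
  exact Submodule.Quotient.mk_smul _ _ _


end Statement11

end
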